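/- Let k ≥ 1 and let η be a configuration whose set of unstable sites is finite and nonempty, with I(η) unstable sites. Then E[I(R^k(η))] ≤ ( (1/3) p_k^{III} + (2/3) p_k^I + (1/3) max_{1 ≤ g ≤ 4k} Σ_{i=1}^{g} p_k^S(i−1, g−i) ) · I(η), where I(ξ) denotes the number of unstable sites of a configuration ξ. -/

import Mathlib

open MeasureTheory ENNReal
open scoped Classical

/-- A configuration: a coloring of `ℤ` with the two colors coded by `Bool`. -/
abbrev Config := ℤ → Bool

/-- A site `x` is unstable in `η` iff it lies in a monochromatic chain of length (at least) 3,
i.e. there is `y ∈ {x-2, x-1, x}` with `η y = η (y+1) = η (y+2)`. Spelled out explicitly. -/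
def Unstable (η : Config) (x : ℤ) : Prop :=
  (η (x - 2) = η (x - 1) ∧ η (x - 1) = η x) ∨
  (η (x - 1) = η x ∧ η x = η (x + 1)) ∨
  (η x = η (x + 1) ∧ η (x + 1) = η (x + 2))

instance (η : Config) (x : ℤ) : Decidable (Unstable η x) := by
  unfold Unstable; infer_instance

/-- One step of the dynamics: stable sites keep their color, unstable ones are recolored
using the fresh colors `c`. -/
def update (η : Config) (c : ℤ → Bool) : Config :=
  fun x => if Unstable η x then c x else η x

/-- `evolve ω η k = R^k(η)`: the configuration after `k` steps, where the simultaneous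
recoloring at step `j` uses the fresh colors `ω j`. -/
def evolve (ω : ℕ → ℤ → Bool) (η : Config) : ℕ → Config
  | 0 => η
  | k + 1 => update (evolve ω η k) (ω k)

/-- `μ` makes the coordinates of the coin field i.i.d. uniform on the two colors:
every finite cylinder event has probability `(1/2)^(number of coordinates)`. -/
def IIDCoins (μ : Measure (ℕ → ℤ → Bool)) : Prop :=
  ∀ (S : Finset (ℕ × ℤ)) (f : ℕ × ℤ → Bool),
    μ {ω | ∀ p ∈ S, ω p.1 p.2 = f p} = (1 / 2 : ℝ≥0∞) ^ S.card

/-- The number of unstable sites of a configuration. -/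
noncomputable def numUnstable (η : Config) : ℕ∞ := {x : ℤ | Unstable η x}.encard

/-- `p_k^I`: sup over configurations `η` with site `0` unstable of `P(σ_{R^k(η)}(0) = 0)`. -/
noncomputable def pI (μ : Measure (ℕ → ℤ → Bool)) (k : ℕ) : ℝ≥0∞ :=
  ⨆ (η : Config) (_ : Unstable η 0), μ {ω | Unstable (evolve ω η k) 0}

/-- `p_k^{III}`: sup over configurations `η` with sites `-1, 0, 1` all unstable of
`P(σ_{R^k(η)}(0) = 0)`. -/
noncomputable def pIII (μ : Measure (ℕ → ℤ → Bool)) (k : ℕ) : ℝ≥0∞ :=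
  ⨆ (η : Config) (_ : Unstable η (-1) ∧ Unstable η 0 ∧ Unstable η 1),
    μ {ω | Unstable (evolve ω η k) 0}

/-- The conditioning event of `p_k^S(n,m)` (at site `0`): all sites `i` with `-n ≤ i ≤ m`
are stable, and the boundary sites `-n-1` (if `n` is finite) and `m+1` (if `m` is finite)
are unstable.  The inequality `-n ≤ i ≤ m` in `ℕ∞` is coded using `Int.toNat`. -/
def SWindow (η : Config) (n m : ℕ∞) : Prop :=
  (∀ i : ℤ, (((-i).toNat : ℕ∞) ≤ n) → ((i.toNat : ℕ∞) ≤ m) → ¬ Unstable η i) ∧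
  (∀ nn : ℕ, n = (nn : ℕ∞) → Unstable η (-(nn : ℤ) - 1)) ∧
  (∀ mm : ℕ, m = (mm : ℕ∞) → Unstable η ((mm : ℤ) + 1))

/-- `p_k^S(n,m)` for `n, m ∈ ℕ ∪ {∞}`: sup over configurations `η` satisfying the stable-window
condition of `P(σ_{R^k(η)}(0) = 0)`. -/
noncomputable def pS (μ : Measure (ℕ → ℤ → Bool)) (k : ℕ) (n m : ℕ∞) : ℝ≥0∞ :=
  ⨆ (η : Config) (_ : SWindow η n m), μ {ω | Unstable (evolve ω η k) 0}

lemma unstable_congr {ξ ξ' : Config} {x : ℤ}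
    (h : ∀ y, x - 2 ≤ y → y ≤ x + 2 → ξ y = ξ' y) :
    Unstable ξ x ↔ Unstable ξ' x := by
  unfold Unstable
  rw [h (x-2) (by omega) (by omega), h (x-1) (by omega) (by omega),
      h x (by omega) (by omega), h (x+1) (by omega) (by omega),
      h (x+2) (by omega) (by omega)]

lemma evolve_stable_ball (ω : ℕ → ℤ → Bool) (η : Config) :
    ∀ t : ℕ, ∀ z : ℤ, (∀ y, z - 2*(t:ℤ) ≤ y → y ≤ z + 2*(t:ℤ) → ¬ Unstable η y) →
      evolve ω η t z = η z ∧ ¬ Unstable (evolve ω η t) z := by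
  intro t
  induction t with
  | zero => intro z h; exact ⟨rfl, h z (by omega) (by omega)⟩
  | succ t ih =>
    intro z h
    have hball : ∀ y, z - 2 ≤ y → y ≤ z + 2 →
        evolve ω η t y = η y ∧ ¬ Unstable (evolve ω η t) y := by
      intro y h1 h2
      exact ih y (fun w hw1 hw2 => h w (by push_cast at *; omega) (by push_cast at *; omega))
    have hagree' : ∀ y, z - 2 ≤ y → y ≤ z + 2 → evolve ω η (t+1) y = η y := by
      intro y h1 h2
      show update (evolve ω η t) (ω t) y = η y
      rw [update, if_neg (hball y h1 h2).2]
      exact (hball y h1 h2).1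
    refine ⟨hagree' z (by omega) (by omega), fun hc => ?_⟩
    exact h z (by omega) (by omega) ((unstable_congr hagree').mp hc)

lemma evolve_agree_right (ω : ℕ → ℤ → Bool) (η η' : Config) (k : ℕ) (x : ℤ)
    (hagree : ∀ y, y ≤ x + 2*(k:ℤ) → η y = η' y)
    (h1 : ¬ Unstable η (x + 2*(k:ℤ) - 1)) (h2 : ¬ Unstable η (x + 2*(k:ℤ)))
    (h1' : ¬ Unstable η' (x + 2*(k:ℤ) - 1)) (h2' : ¬ Unstable η' (x + 2*(k:ℤ))) :
    ∀ t : ℕ, 1 ≤ t → ∀ y, y ≤ x + 2*(k:ℤ) + 2 - 2*(t:ℤ) →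
      evolve ω η t y = evolve ω η' t y := by
  intro t
  induction t with
  | zero => omega
  | succ t ih =>
    intro _ y hy
    by_cases ht : 1 ≤ t
    · -- step case, t ≥ 1
      have hA : ∀ w, y - 2 ≤ w → w ≤ y + 2 → evolve ω η t w = evolve ω η' t w := by
        intro w hw1 hw2
        exact ih ht w (by push_cast at *; omega)
      have hiff := unstable_congr hA
      show update (evolve ω η t) (ω t) y = update (evolve ω η' t) (ω t) y
      unfold update
      by_cases hu : Unstable (evolve ω η t) y
      · rw [if_pos hu, if_pos (hiff.mp hu)]
      · rw [if_neg hu, if_neg (fun hc => hu (hiff.mpr hc))]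
        exact hA y (by omega) (by omega)
    · -- base case t = 0
      have ht0 : t = 0 := by omega
      subst ht0
      show update η (ω 0) y = update η' (ω 0) y
      unfold update
      push_cast at hy
      by_cases hy2 : y ≤ x + 2*(k:ℤ) - 2
      · have hiff := unstable_congr (fun w (hw1 : y - 2 ≤ w) (hw2 : w ≤ y + 2) =>
          hagree w (by omega))
        by_cases hu : Unstable η y
        · rw [if_pos hu, if_pos (hiff.mp hu)]
        · rw [if_neg hu, if_neg (fun hc => hu (hiff.mpr hc)), hagree y (by omega)]
      · have : y = x + 2*(k:ℤ) - 1 ∨ y = x + 2*(k:ℤ) := by omega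
        rcases this with rfl | rfl
        · rw [if_neg h1, if_neg h1', hagree _ (by omega)]
        · rw [if_neg h2, if_neg h2', hagree _ (by omega)]

lemma unstable_evolve_agree_right (ω : ℕ → ℤ → Bool) (η η' : Config) (k : ℕ) (hk : 1 ≤ k) (x : ℤ)
    (hagree : ∀ y, y ≤ x + 2*(k:ℤ) → η y = η' y)
    (h1 : ¬ Unstable η (x + 2*(k:ℤ) - 1)) (h2 : ¬ Unstable η (x + 2*(k:ℤ)))
    (h1' : ¬ Unstable η' (x + 2*(k:ℤ) - 1)) (h2' : ¬ Unstable η' (x + 2*(k:ℤ))) :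
    Unstable (evolve ω η k) x ↔ Unstable (evolve ω η' k) x := by
  refine unstable_congr (fun y hy1 hy2 => ?_)
  exact evolve_agree_right ω η η' k x hagree h1 h2 h1' h2' k hk y (by omega)

lemma unstable_shift (ξ : Config) (a z : ℤ) :
    Unstable (fun w => ξ (w + a)) z ↔ Unstable ξ (z + a) := by
  unfold Unstable
  simp only [show z - 2 + a = z + a - 2 from by ring, show z - 1 + a = z + a - 1 from by ring,
    show z + 1 + a = z + a + 1 from by ring, show z + 2 + a = z + a + 2 from by ring]

lemma evolve_shift (ω : ℕ → ℤ → Bool) (η : Config) (a : ℤ) :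
    ∀ t z, evolve ω (fun w => η (w + a)) t z
      = evolve (fun j w => ω j (w - a)) η t (z + a) := by
  intro t
  induction t with
  | zero => intro z; rfl
  | succ t ih =>
    intro z
    show update _ (ω t) z = update _ _ (z + a)
    unfold update
    have hiff : Unstable (evolve ω (fun w => η (w + a)) t) z ↔
        Unstable (evolve (fun j w => ω j (w - a)) η t) (z + a) := by
      rw [unstable_congr (fun y _ _ => ih y)]
      exact unstable_shift _ a z
    by_cases hu : Unstable (evolve ω (fun w => η (w + a)) t) z
    · rw [if_pos hu, if_pos (hiff.mp hu)]
      simp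
    · rw [if_neg hu, if_neg (fun hc => hu (hiff.mpr hc)), ih]

lemma unstable_reflect (ξ : Config) (z : ℤ) :
    Unstable (fun w => ξ (-w)) z ↔ Unstable ξ (-z) := by
  unfold Unstable
  simp only [show -(z - 2) = -z + 2 from by ring, show -(z - 1) = -z + 1 from by ring,
    show -(z + 1) = -z - 1 from by ring, show -(z + 2) = -z - 2 from by ring]
  constructor <;> rintro (⟨u, v⟩ | ⟨u, v⟩ | ⟨u, v⟩)
  · exact Or.inr (Or.inr ⟨v.symm, u.symm⟩)
  · exact Or.inr (Or.inl ⟨v.symm, u.symm⟩)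
  · exact Or.inl ⟨v.symm, u.symm⟩
  · exact Or.inr (Or.inr ⟨v.symm, u.symm⟩)
  · exact Or.inr (Or.inl ⟨v.symm, u.symm⟩)
  · exact Or.inl ⟨v.symm, u.symm⟩

lemma evolve_reflect (ω : ℕ → ℤ → Bool) (η : Config) :
    ∀ t z, evolve ω (fun w => η (-w)) t z
      = evolve (fun j w => ω j (-w)) η t (-z) := by
  intro t
  induction t with
  | zero => intro z; rfl
  | succ t ih =>
    intro z
    show update _ (ω t) z = update _ _ (-z)
    unfold update
    have hiff : Unstable (evolve ω (fun w => η (-w)) t) z ↔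
        Unstable (evolve (fun j w => ω j (-w)) η t) (-z) := by
      rw [unstable_congr (fun y _ _ => ih y)]
      exact unstable_reflect _ z
    by_cases hu : Unstable (evolve ω (fun w => η (-w)) t) z
    · rw [if_pos hu, if_pos (hiff.mp hu)]
      simp
    · rw [if_neg hu, if_neg (fun hc => hu (hiff.mpr hc)), ih]

section Counting

variable {μ : Measure (ℕ → ℤ → Bool)}

def Agree (S : Finset (ℕ × ℤ)) (ω ω' : ℕ → ℤ → Bool) : Prop :=
  ∀ p ∈ S, ω p.1 p.2 = ω' p.1 p.2

def DeterminedBy (A : Set (ℕ → ℤ → Bool)) (S : Finset (ℕ × ℤ)) : Prop :=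
  ∀ ω ω', Agree S ω ω' → (ω ∈ A ↔ ω' ∈ A)

noncomputable def extAssign (S : Finset (ℕ × ℤ)) (g : {p // p ∈ S} → Bool) : ℕ → ℤ → Bool :=
  fun j z => if h : (j, z) ∈ S then g ⟨(j, z), h⟩ else false

def cyl (S : Finset (ℕ × ℤ)) (g : {p // p ∈ S} → Bool) : Set (ℕ → ℤ → Bool) :=
  {ω | ∀ p ∈ S, ω p.1 p.2 = extAssign S g p.1 p.2}

lemma measurable_coord (j : ℕ) (z : ℤ) :
    Measurable (fun ω : ℕ → ℤ → Bool => ω j z) :=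
  (measurable_pi_apply z).comp (measurable_pi_apply j)

lemma measurableSet_cyl (S : Finset (ℕ × ℤ)) (g : {p // p ∈ S} → Bool) :
    MeasurableSet (cyl S g) := by
  have : cyl S g = ⋂ p ∈ S, {ω : ℕ → ℤ → Bool | ω p.1 p.2 = extAssign S g p.1 p.2} := by
    ext ω; simp [cyl]
  rw [this]
  exact MeasurableSet.biInter S.countable_toSet
    (fun p _ => (measurable_coord p.1 p.2) (measurableSet_singleton _))

lemma mem_cyl_self (S : Finset (ℕ × ℤ)) (ω : ℕ → ℤ → Bool) :
    ω ∈ cyl S (fun q => ω q.1.1 q.1.2) := by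
  intro p hp
  simp only [extAssign]
  rw [dif_pos (show (p.1, p.2) ∈ S from by rwa [Prod.mk.eta])]

lemma agree_of_mem_cyl {S : Finset (ℕ × ℤ)} {g : {p // p ∈ S} → Bool}
    {ω : ℕ → ℤ → Bool} (h : ω ∈ cyl S g) : Agree S ω (extAssign S g) := h

lemma measure_cyl (hμ : IIDCoins μ) (S : Finset (ℕ × ℤ)) (g : {p // p ∈ S} → Bool) :
    μ (cyl S g) = (1 / 2 : ℝ≥0∞) ^ S.card :=
  hμ S (fun p => extAssign S g p.1 p.2)

lemma determined_eq_biUnion {A : Set (ℕ → ℤ → Bool)} {S : Finset (ℕ × ℤ)}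
    (hdet : DeterminedBy A S) :
    A = ⋃ g ∈ Finset.univ.filter (fun g : {p // p ∈ S} → Bool => extAssign S g ∈ A),
      cyl S g := by
  ext ω
  simp only [Set.mem_iUnion, Finset.mem_filter, Finset.mem_univ, true_and, exists_prop]
  constructor
  · intro hA
    refine ⟨fun q => ω q.1.1 q.1.2, ?_, mem_cyl_self S ω⟩
    exact (hdet ω _ (mem_cyl_self S ω)).mp hA
  · rintro ⟨g, hg, hcyl⟩
    exact (hdet ω _ (agree_of_mem_cyl hcyl)).mpr hg

lemma measurableSet_determined {A : Set (ℕ → ℤ → Bool)} {S : Finset (ℕ × ℤ)}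
    (hdet : DeterminedBy A S) : MeasurableSet A := by
  rw [determined_eq_biUnion hdet]
  exact MeasurableSet.biUnion (Finset.univ.filter _).countable_toSet
    (fun g _ => measurableSet_cyl S g)

lemma measure_determined (hμ : IIDCoins μ) {A : Set (ℕ → ℤ → Bool)} {S : Finset (ℕ × ℤ)}
    (hdet : DeterminedBy A S) :
    μ A = ((Finset.univ.filter
        (fun g : {p // p ∈ S} → Bool => extAssign S g ∈ A)).card : ℝ≥0∞)
      * (1 / 2 : ℝ≥0∞) ^ S.card := by
  have hAmeas := measurableSet_determined hdet
  have hcover : A = ⋃ g : {p // p ∈ S} → Bool, A ∩ cyl S g := by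
    ext ω
    simp only [Set.mem_iUnion, Set.mem_inter_iff]
    exact ⟨fun h => ⟨_, h, mem_cyl_self S ω⟩, fun ⟨g, h, _⟩ => h⟩
  have hdisj : Pairwise (Function.onFun Disjoint (fun g : {p // p ∈ S} → Bool =>
      A ∩ cyl S g)) := by
    intro g g' hgg'
    refine Set.disjoint_left.mpr (fun ω ⟨_, h1⟩ ⟨_, h2⟩ => hgg' ?_)
    funext q
    have e1 := h1 q.1 q.2
    have e2 := h2 q.1 q.2
    rw [e1] at e2
    simp only [extAssign] at e2
    rw [dif_pos (show (q.1.1, q.1.2) ∈ S from by rw [Prod.mk.eta]; exact q.2),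
        dif_pos (show (q.1.1, q.1.2) ∈ S from by rw [Prod.mk.eta]; exact q.2)] at e2
    convert e2 <;> exact (Subtype.ext (Prod.mk.eta).symm)
  have key : ∀ g : {p // p ∈ S} → Bool,
      A ∩ cyl S g = if extAssign S g ∈ A then cyl S g else ∅ := by
    intro g
    by_cases h : extAssign S g ∈ A
    · rw [if_pos h]
      refine Set.eq_of_subset_of_subset (Set.inter_subset_right) (fun ω hω => ?_)
      exact ⟨(hdet ω _ (agree_of_mem_cyl hω)).mpr h, hω⟩
    · rw [if_neg h]
      refine Set.eq_empty_of_subset_empty (fun ω ⟨hA, hcy⟩ => ?_)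
      exact h ((hdet ω _ (agree_of_mem_cyl hcy)).mp hA)
  have hval : ∀ g : {p // p ∈ S} → Bool, μ (A ∩ cyl S g)
      = if extAssign S g ∈ A then (1 / 2 : ℝ≥0∞) ^ S.card else 0 := by
    intro g
    rw [key g]
    split
    · exact measure_cyl hμ S g
    · exact measure_empty
  calc μ A = μ (⋃ g : {p // p ∈ S} → Bool, A ∩ cyl S g) := congrArg μ hcover
    _ = ∑' g : {p // p ∈ S} → Bool, μ (A ∩ cyl S g) :=
        measure_iUnion hdisj (fun g => hAmeas.inter (measurableSet_cyl S g))
    _ = ∑ g : {p // p ∈ S} → Bool, μ (A ∩ cyl S g) := tsum_fintype _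
    _ = ∑ g : {p // p ∈ S} → Bool,
          if extAssign S g ∈ A then (1 / 2 : ℝ≥0∞) ^ S.card else 0 := by
        simp only [hval]
    _ = _ := by
        rw [Finset.sum_ite, Finset.sum_const, Finset.sum_const, smul_zero, add_zero,
          nsmul_eq_mul]

lemma measure_relabel (hμ : IIDCoins μ) (π : ℤ ≃ ℤ) {A : Set (ℕ → ℤ → Bool)}
    {S : Finset (ℕ × ℤ)} (hdet : DeterminedBy A S) :
    μ ((fun (ω : ℕ → ℤ → Bool) (j : ℕ) (z : ℤ) => ω j (π z)) ⁻¹' A) = μ A := by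
  set Φ : (ℕ → ℤ → Bool) → (ℕ → ℤ → Bool) := fun ω j z => ω j (π z) with hΦ
  set S' : Finset (ℕ × ℤ) := S.image (fun p => (p.1, π p.2)) with hS'
  have hinj : Function.Injective (fun p : ℕ × ℤ => (p.1, π p.2)) := by
    intro p q h
    have h' : (p.1, π p.2) = (q.1, π q.2) := h
    rw [Prod.mk.injEq] at h'
    exact Prod.ext h'.1 (π.injective h'.2)
  have hmemS' : ∀ p ∈ S, (p.1, π p.2) ∈ S' := fun p hp => Finset.mem_image_of_mem _ hp
  have hdet' : DeterminedBy (Φ ⁻¹' A) S' := by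
    intro ω ω' hag
    refine hdet (Φ ω) (Φ ω') ?_
    intro p hp
    exact hag (p.1, π p.2) (hmemS' p hp)
  -- the subtype equivalence
  have hmemS : ∀ q' : {p // p ∈ S'}, (q'.1.1, π.symm q'.1.2) ∈ S := by
    intro q'
    rcases Finset.mem_image.mp q'.2 with ⟨p, hp, heq⟩
    have heq' : (p.1, π p.2) = q'.1 := heq
    have h1 : q'.1.1 = p.1 := by rw [← heq']
    have h2 : q'.1.2 = π p.2 := by rw [← heq']
    have : (q'.1.1, π.symm q'.1.2) = p := by
      rw [h1, h2, π.symm_apply_apply]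
    rw [this]; exact hp
  rw [measure_determined hμ hdet, measure_determined hμ hdet']
  have hcard : S'.card = S.card := Finset.card_image_of_injective S hinj
  rw [hcard]
  congr 1
  norm_cast
  set i : ({p // p ∈ S'} → Bool) → ({p // p ∈ S} → Bool) :=
    fun g' q => g' ⟨(q.1.1, π q.1.2), hmemS' q.1 q.2⟩ with hi
  refine Finset.card_bij (fun g' _ => i g') ?_ ?_ ?_
  · -- maps filter' to filter
    intro g' hg'
    simp only [Finset.mem_filter, Finset.mem_univ, true_and] at hg' ⊢
    have hagree : Agree S (Φ (extAssign S' g')) (extAssign S (i g')) := by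
      intro p hp
      simp only [hΦ, extAssign]
      rw [dif_pos (hmemS' p hp), dif_pos (show (p.1, p.2) ∈ S from by rwa [Prod.mk.eta])]
    exact (hdet _ _ hagree).mp hg'
  · -- injective
    intro g1 h1 g2 h2 heq
    funext q'
    rcases Finset.mem_image.mp q'.2 with ⟨p, hp, hpq⟩
    have hpq' : (p.1, π p.2) = q'.1 := hpq
    have e : g1 ⟨(p.1, π p.2), hmemS' p hp⟩ = g2 ⟨(p.1, π p.2), hmemS' p hp⟩ :=
      congrFun heq ⟨p, hp⟩
    calc g1 q' = g1 ⟨(p.1, π p.2), hmemS' p hp⟩ := congrArg g1 (Subtype.ext hpq'.symm)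
      _ = g2 ⟨(p.1, π p.2), hmemS' p hp⟩ := e
      _ = g2 q' := congrArg g2 (Subtype.ext hpq')
  · -- surjective
    intro g hg
    refine ⟨fun q' : {p // p ∈ S'} => g ⟨(q'.1.1, π.symm q'.1.2), hmemS q'⟩, ?_, ?_⟩
    · simp only [Finset.mem_filter, Finset.mem_univ, true_and] at hg ⊢
      have hagree : Agree S
          (Φ (extAssign S' (fun q' : {p // p ∈ S'} =>
            g ⟨(q'.1.1, π.symm q'.1.2), hmemS q'⟩))) (extAssign S g) := by
        intro p hp
        simp only [hΦ, extAssign]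
        rw [dif_pos (hmemS' p hp), dif_pos (show (p.1, p.2) ∈ S from by rwa [Prod.mk.eta])]
        exact congrArg g (Subtype.ext
          (show ((p.1 : ℕ), π.symm (π p.2)) = (p.1, p.2) from by
            rw [Equiv.symm_apply_apply]))
      exact (hdet _ _ hagree).mpr hg
    · funext q
      have hcomp : ((q.1.1 : ℕ), π.symm (π q.1.2)) = q.1 := by
        rw [Equiv.symm_apply_apply, Prod.mk.eta]
      exact congrArg g (Subtype.ext hcomp)

end Counting


section Bridge

variable {μ : Measure (ℕ → ℤ → Bool)}

/-- The event that site `x` is unstable at time `k`, started from `η`. -/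
def Ev (η : Config) (k : ℕ) (x : ℤ) : Set (ℕ → ℤ → Bool) :=
  {ω | Unstable (evolve ω η k) x}

noncomputable def depSet (k : ℕ) (x : ℤ) : Finset (ℕ × ℤ) :=
  (Finset.range k) ×ˢ (Finset.Icc (x - (2*(k:ℤ)+2)) (x + (2*(k:ℤ)+2)))

lemma evolve_agree_omega (η : Config) (k : ℕ) (x : ℤ) (ω ω' : ℕ → ℤ → Bool)
    (hag : Agree (depSet k x) ω ω') :
    ∀ t : ℕ, t ≤ k → ∀ y : ℤ, x - 2*((k:ℤ) - t) - 2 ≤ y → y ≤ x + 2*((k:ℤ) - t) + 2 →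
      evolve ω η t y = evolve ω' η t y := by
  intro t
  induction t with
  | zero => intro _ y _ _; rfl
  | succ t ih =>
    intro ht y hy1 hy2
    have ht' : t ≤ k := by omega
    have hA : ∀ w, y - 2 ≤ w → w ≤ y + 2 → evolve ω η t w = evolve ω' η t w := by
      intro w hw1 hw2
      refine ih ht' w (by push_cast at *; omega) (by push_cast at *; omega)
    have hiff := unstable_congr hA
    show update (evolve ω η t) (ω t) y = update (evolve ω' η t) (ω' t) y
    unfold update
    by_cases hu : Unstable (evolve ω η t) y
    · rw [if_pos hu, if_pos (hiff.mp hu)]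
      refine hag (t, y) ?_
      simp only [depSet, Finset.mem_product, Finset.mem_range, Finset.mem_Icc]
      constructor
      · omega
      · push_cast at *; constructor <;> omega
    · rw [if_neg hu, if_neg (fun hc => hu (hiff.mpr hc))]
      exact hA y (by omega) (by omega)

lemma det_Ev (η : Config) (k : ℕ) (x : ℤ) : DeterminedBy (Ev η k x) (depSet k x) := by
  intro ω ω' hag
  have h : ∀ y, x - 2 ≤ y → y ≤ x + 2 → evolve ω η k y = evolve ω' η k y := by
    intro y h1 h2
    refine evolve_agree_omega η k x ω ω' hag k le_rfl y (by push_cast; omega)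
      (by push_cast; omega)
  exact unstable_congr h

lemma measurableSet_Ev (η : Config) (k : ℕ) (x : ℤ) : MeasurableSet (Ev η k x) :=
  measurableSet_determined (det_Ev η k x)

lemma measure_Ev_shift (hμ : IIDCoins μ) (η : Config) (k : ℕ) (a : ℤ) :
    μ (Ev (fun w => η (w + a)) k 0) = μ (Ev η k a) := by
  have hset : Ev (fun w => η (w + a)) k 0
      = (fun (ω : ℕ → ℤ → Bool) (j : ℕ) (z : ℤ) => ω j ((Equiv.subRight a) z)) ⁻¹' Ev η k a := by
    ext ω
    show Unstable (evolve ω (fun w => η (w + a)) k) 0 ↔ _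
    have hpt : ∀ z, evolve ω (fun w => η (w + a)) k z
        = (fun w => evolve (fun j w' => ω j (w' - a)) η k (w + a)) z :=
      fun z => evolve_shift ω η a k z
    rw [unstable_congr (fun y _ _ => hpt y), unstable_shift]
    simp only [Set.mem_preimage, zero_add]
    rfl
  rw [hset]
  exact measure_relabel hμ (Equiv.subRight a) (det_Ev η k a)

lemma measure_Ev_reflect (hμ : IIDCoins μ) (η : Config) (k : ℕ) :
    μ (Ev (fun w => η (-w)) k 0) = μ (Ev η k 0) := by
  have hset : Ev (fun w => η (-w)) k 0
      = (fun (ω : ℕ → ℤ → Bool) (j : ℕ) (z : ℤ) => ω j ((Equiv.neg ℤ) z)) ⁻¹' Ev η k 0 := by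
    ext ω
    show Unstable (evolve ω (fun w => η (-w)) k) 0 ↔ _
    have hpt : ∀ z, evolve ω (fun w => η (-w)) k z
        = (fun w => evolve (fun j w' => ω j (-w')) η k (-w)) z :=
      fun z => evolve_reflect ω η k z
    rw [unstable_congr (fun y _ _ => hpt y), unstable_reflect]
    simp only [Set.mem_preimage, neg_zero]
    rfl
  rw [hset]
  exact measure_relabel hμ (Equiv.neg ℤ) (det_Ev η k 0)

end Bridge

section PerSite

variable {μ : Measure (ℕ → ℤ → Bool)}

lemma unstable_iff_triple (ξ : Config) (z : ℤ) :
    Unstable ξ z ↔ ∃ s, z - 2 ≤ s ∧ s ≤ z ∧ ξ s = ξ (s+1) ∧ ξ (s+1) = ξ (s+2) := by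
  unfold Unstable
  constructor
  · rintro (⟨u, v⟩ | ⟨u, v⟩ | ⟨u, v⟩)
    · refine ⟨z - 2, by omega, by omega, ?_, ?_⟩
      · rw [show z - 2 + 1 = z - 1 from by ring]; exact u
      · rw [show z - 2 + 1 = z - 1 from by ring, show z - 2 + 2 = z from by ring]; exact v
    · refine ⟨z - 1, by omega, by omega, ?_, ?_⟩
      · rw [show z - 1 + 1 = z from by ring]; exact u
      · rw [show z - 1 + 1 = z from by ring, show z - 1 + 2 = z + 1 from by ring]; exact v
    · exact ⟨z, by omega, by omega, u, v⟩
  · rintro ⟨s, h1, h2, h3, h4⟩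
    have : s = z - 2 ∨ s = z - 1 ∨ s = z := by omega
    rcases this with rfl | rfl | rfl
    · left
      rw [show z - 2 + 1 = z - 1 from by ring] at h3 h4
      rw [show z - 2 + 2 = z from by ring] at h4
      exact ⟨h3, h4⟩
    · right; left
      rw [show z - 1 + 1 = z from by ring] at h3 h4
      rw [show z - 1 + 2 = z + 1 from by ring] at h4
      exact ⟨h3, h4⟩
    · right; right; exact ⟨h3, h4⟩

lemma unstable_reflectAt (η : Config) (x z : ℤ) :
    Unstable (fun w => η (x - w)) z ↔ Unstable η (x - z) := by
  have h1 : (fun w => η (x - w)) = fun w => (fun v => η (v + x)) (-w) := by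
    funext w; simp only; rw [show -w + x = x - w from by ring]
  rw [h1, unstable_reflect (fun v => η (v + x)) z, unstable_shift,
    show -z + x = x - z from by ring]

lemma bound_pI (hμ : IIDCoins μ) (k : ℕ) (η : Config) (x : ℤ) (hx : Unstable η x) :
    μ (Ev η k x) ≤ pI μ k := by
  rw [← measure_Ev_shift hμ η k x]
  have h0 : Unstable (fun w => η (w + x)) 0 := by
    rw [unstable_shift, zero_add]; exact hx
  exact le_iSup₂ (f := fun (η' : Config) (_ : Unstable η' 0) => μ (Ev η' k 0)) _ h0

lemma bound_pIII (hμ : IIDCoins μ) (k : ℕ) (η : Config) (x : ℤ)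
    (hm : Unstable η (x - 1)) (hx : Unstable η x) (hp : Unstable η (x + 1)) :
    μ (Ev η k x) ≤ pIII μ k := by
  rw [← measure_Ev_shift hμ η k x]
  have h0 : Unstable (fun w => η (w + x)) (-1) ∧ Unstable (fun w => η (w + x)) 0 ∧
      Unstable (fun w => η (w + x)) 1 := by
    refine ⟨?_, ?_, ?_⟩ <;> rw [unstable_shift]
    · rw [show (-1 : ℤ) + x = x - 1 from by ring]; exact hm
    · rw [zero_add]; exact hx
    · rw [show (1 : ℤ) + x = x + 1 from by ring]; exact hp
  exact le_iSup₂ (f := fun (η' : Config)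
    (_ : Unstable η' (-1) ∧ Unstable η' 0 ∧ Unstable η' 1) => μ (Ev η' k 0)) _ h0

lemma pIII_le_pI (μ : Measure (ℕ → ℤ → Bool)) (k : ℕ) : pIII μ k ≤ pI μ k :=
  iSup₂_le fun η h => le_iSup₂ (f := fun (η' : Config) (_ : Unstable η' 0) =>
    μ {ω | Unstable (evolve ω η' k) 0}) η h.2.1

lemma Ev_far_empty (k : ℕ) (η : Config) (x : ℤ)
    (h : ∀ y, x - 2*(k:ℤ) ≤ y → y ≤ x + 2*(k:ℤ) → ¬ Unstable η y) :
    Ev η k x = ∅ := by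
  rw [Set.eq_empty_iff_forall_notMem]
  intro ω hω
  exact (evolve_stable_ball ω η k x (fun y h1 h2 => h y (by omega) (by omega))).2 hω

lemma swindow_of (η' : Config) (n m : ℕ∞)
    (hw : ∀ i : ℤ, (∀ nn : ℕ, n = (nn : ℕ∞) → -(nn:ℤ) ≤ i) →
      (∀ mm : ℕ, m = (mm : ℕ∞) → i ≤ (mm:ℤ)) → ¬ Unstable η' i)
    (hbl : ∀ nn : ℕ, n = (nn : ℕ∞) → Unstable η' (-(nn:ℤ) - 1))
    (hbr : ∀ mm : ℕ, m = (mm : ℕ∞) → Unstable η' ((mm:ℤ) + 1)) : SWindow η' n m := by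
  refine ⟨?_, hbl, hbr⟩
  intro i h1 h2
  apply hw i
  · intro nn hnn
    rw [hnn, Nat.cast_le] at h1
    have := Int.toNat_le.mp h1
    omega
  · intro mm hmm
    rw [hmm, Nat.cast_le] at h2
    have := Int.toNat_le.mp h2
    omega

/-- Right-modification: replace the configuration strictly to the right of `x + m'` by a
constant color, creating an unstable boundary site exactly at `x + m' + 1`. -/
lemma rightmod (k : ℕ) (hk : 1 ≤ k) (η : Config) (x : ℤ) (n : ℕ∞) (m' : ℕ)
    (hm' : 2*k ≤ m')
    (hwin : ∀ y : ℤ, (∀ nn : ℕ, n = (nn : ℕ∞) → x - nn ≤ y) → y ≤ x + m' + 1 →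
      ¬ Unstable η y)
    (hl : ∀ nn : ℕ, n = (nn : ℕ∞) → Unstable η (x - nn - 1)) :
    ∃ η' : Config, Ev η k x = Ev η' k x ∧
      (∀ z : ℤ, (∀ nn : ℕ, n = (nn : ℕ∞) → x - nn ≤ z) → z ≤ x + m' → ¬ Unstable η' z) ∧
      Unstable η' (x + m' + 1) ∧
      (∀ nn : ℕ, n = (nn : ℕ∞) → Unstable η' (x - nn - 1)) := by
  classical
  set η' : Config := fun y => if y ≤ x + m' then η y else !(η (x + m')) with hη'
  have hag : ∀ y : ℤ, y ≤ x + m' → η' y = η y := by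
    intro y hy; rw [hη']; simp only; rw [if_pos hy]
  have hbig : ∀ y : ℤ, x + m' < y → η' y = !(η (x + m')) := by
    intro y hy; rw [hη']; simp only; rw [if_neg (by omega)]
  have h'win : ∀ z : ℤ, (∀ nn : ℕ, n = (nn : ℕ∞) → x - nn ≤ z) → z ≤ x + m' →
      ¬ Unstable η' z := by
    intro z hz1 hz2 hu
    rcases (unstable_iff_triple η' z).mp hu with ⟨s, hs1, hs2, h3, h4⟩
    by_cases hc : s + 2 ≤ x + m'
    · rw [hag s (by omega), hag (s+1) (by omega)] at h3
      rw [hag (s+1) (by omega), hag (s+2) (by omega)] at h4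
      refine hwin (s+2) (fun nn hnn => by have := hz1 nn hnn; omega) (by omega) ?_
      exact (unstable_iff_triple η (s+2)).mpr ⟨s, by omega, by omega, h3, h4⟩
    · have hcase : s + 2 = x + m' + 1 ∨ s + 2 = x + m' + 2 := by omega
      rcases hcase with h | h
      · rw [hag (s+1) (by omega), hbig (s+2) (by omega)] at h4
        rw [show s + 1 = x + m' from by omega] at h4
        exact Bool.not_ne_self _ h4.symm
      · rw [hag s (by omega), hbig (s+1) (by omega)] at h3
        rw [show s = x + m' from by omega] at h3
        exact Bool.not_ne_self _ h3.symm
  have h'bdry : Unstable η' (x + m' + 1) := by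
    refine (unstable_iff_triple η' (x + m' + 1)).mpr
      ⟨x + m' + 1, by omega, by omega, ?_, ?_⟩
    · rw [hbig _ (by omega), hbig _ (by omega)]
    · rw [hbig _ (by omega), hbig _ (by omega)]
  have h'left : ∀ nn : ℕ, n = (nn : ℕ∞) → Unstable η' (x - nn - 1) := by
    intro nn hnn
    exact (unstable_congr (fun y (hy1 : x - nn - 1 - 2 ≤ y) (hy2 : y ≤ x - nn - 1 + 2) =>
      hag y (by omega))).mpr (hl nn hnn)
  refine ⟨η', ?_, h'win, h'bdry, h'left⟩
  ext ω
  show Unstable (evolve ω η k) x ↔ Unstable (evolve ω η' k) x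
  refine unstable_evolve_agree_right ω η η' k hk x
    (fun y hy => (hag y (by omega)).symm) ?_ ?_ ?_ ?_
  · exact hwin _ (fun nn hnn => by omega) (by omega)
  · exact hwin _ (fun nn hnn => by omega) (by omega)
  · exact h'win _ (fun nn hnn => by omega) (by omega)
  · exact h'win _ (fun nn hnn => by omega) (by omega)

lemma bound_pS_right (hμ : IIDCoins μ) (k : ℕ) (hk : 1 ≤ k) (η : Config) (x : ℤ)
    (n : ℕ∞) (m' : ℕ) (hm' : 2*k ≤ m')
    (hwin : ∀ y : ℤ, (∀ nn : ℕ, n = (nn : ℕ∞) → x - nn ≤ y) → y ≤ x + m' + 1 →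
      ¬ Unstable η y)
    (hl : ∀ nn : ℕ, n = (nn : ℕ∞) → Unstable η (x - nn - 1)) :
    μ (Ev η k x) ≤ pS μ k n (m' : ℕ∞) := by
  obtain ⟨η', hEv, h'win, h'bdry, h'left⟩ := rightmod k hk η x n m' hm' hwin hl
  rw [hEv, ← measure_Ev_shift hμ η' k x]
  have hSW : SWindow (fun w => η' (w + x)) n (m' : ℕ∞) := by
    refine swindow_of _ n _ ?_ ?_ ?_
    · intro i h1 h2
      rw [unstable_shift]
      refine h'win (i + x) (fun nn hnn => by have := h1 nn hnn; omega) ?_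
      have := h2 m' rfl; omega
    · intro nn hnn
      rw [unstable_shift, show -(nn:ℤ) - 1 + x = x - nn - 1 from by ring]
      exact h'left nn hnn
    · intro mm hmm
      have hmm' : mm = m' := by exact_mod_cast hmm.symm
      rw [unstable_shift, hmm', show (m':ℤ) + 1 + x = x + m' + 1 from by ring]
      exact h'bdry
  exact le_iSup₂ (f := fun (η'' : Config) (_ : SWindow η'' n (m' : ℕ∞)) =>
    μ (Ev η'' k 0)) _ hSW

lemma bound_pS_left (hμ : IIDCoins μ) (k : ℕ) (hk : 1 ≤ k) (η : Config) (x : ℤ)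
    (n' : ℕ) (m : ℕ∞) (hn' : 2*k ≤ n')
    (hwin : ∀ y : ℤ, x - n' - 1 ≤ y → (∀ mm : ℕ, m = (mm : ℕ∞) → y ≤ x + mm) →
      ¬ Unstable η y)
    (hr : ∀ mm : ℕ, m = (mm : ℕ∞) → Unstable η (x + mm + 1)) :
    μ (Ev η k x) ≤ pS μ k (n' : ℕ∞) m := by
  set ηR : Config := fun w => η (x - w) with hηR
  have hfun : (fun w => (fun v => η (v + x)) (-w)) = ηR := by
    funext w
    show η (-w + x) = η (x - w)
    rw [show -w + x = x - w from by ring]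
  have hrefl : μ (Ev η k x) = μ (Ev ηR k 0) := by
    calc μ (Ev η k x) = μ (Ev (fun w => η (w + x)) k 0) := (measure_Ev_shift hμ η k x).symm
      _ = μ (Ev (fun w => (fun v => η (v + x)) (-w)) k 0) :=
          (measure_Ev_reflect hμ (fun v => η (v + x)) k).symm
      _ = μ (Ev ηR k 0) := by rw [hfun]
  rw [hrefl]
  have hRwin : ∀ y : ℤ, (∀ nn : ℕ, m = (nn : ℕ∞) → (0:ℤ) - nn ≤ y) →
      y ≤ 0 + n' + 1 → ¬ Unstable ηR y := by
    intro y hy1 hy2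
    rw [hηR]
    show ¬ Unstable (fun w => η (x - w)) y
    rw [unstable_reflectAt]
    refine hwin (x - y) (by omega) (fun mm hmm => by have := hy1 mm hmm; omega)
  have hRl : ∀ nn : ℕ, m = (nn : ℕ∞) → Unstable ηR ((0:ℤ) - nn - 1) := by
    intro nn hnn
    rw [hηR]
    show Unstable (fun w => η (x - w)) (0 - nn - 1)
    rw [unstable_reflectAt, show x - ((0:ℤ) - nn - 1) = x + nn + 1 from by ring]
    exact hr nn hnn
  obtain ⟨η'', hEv, h''win, h''bdry, h''left⟩ := rightmod k hk ηR 0 m n' hn' hRwin hRl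
  rw [hEv, ← measure_Ev_reflect hμ η'' k]
  have hSW : SWindow (fun w => η'' (-w)) (n' : ℕ∞) m := by
    refine swindow_of _ _ m ?_ ?_ ?_
    · intro i h1 h2
      rw [unstable_reflect]
      refine h''win (-i) (fun nn hnn => by have := h2 nn hnn; omega) ?_
      have := h1 n' rfl; omega
    · intro nn hnn
      have hnn' : nn = n' := by exact_mod_cast hnn.symm
      rw [unstable_reflect, hnn', show -(-(n':ℤ) - 1) = 0 + n' + 1 from by ring]
      exact h''bdry
    · intro mm hmm
      rw [unstable_reflect, show -((mm:ℤ) + 1) = 0 - mm - 1 from by ring]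
      exact h''left mm hmm
  exact le_iSup₂ (f := fun (η''' : Config) (_ : SWindow η''' (n' : ℕ∞) m) =>
    μ (Ev η''' k 0)) _ hSW

lemma bound_pS_both (hμ : IIDCoins μ) (k : ℕ) (η : Config) (x : ℤ) (n m : ℕ)
    (hwin : ∀ y : ℤ, x - n ≤ y → y ≤ x + m → ¬ Unstable η y)
    (hl : Unstable η (x - n - 1)) (hr : Unstable η (x + m + 1)) :
    μ (Ev η k x) ≤ pS μ k (n : ℕ∞) (m : ℕ∞) := by
  rw [← measure_Ev_shift hμ η k x]
  have hSW : SWindow (fun w => η (w + x)) (n : ℕ∞) (m : ℕ∞) := by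
    refine swindow_of _ _ _ ?_ ?_ ?_
    · intro i h1 h2
      rw [unstable_shift]
      refine hwin (i + x) ?_ ?_
      · have := h1 n rfl; omega
      · have := h2 m rfl; omega
    · intro nn hnn
      have he : nn = n := by exact_mod_cast hnn.symm
      rw [unstable_shift, he, show -(n:ℤ) - 1 + x = x - n - 1 from by ring]
      exact hl
    · intro mm hmm
      have he : mm = m := by exact_mod_cast hmm.symm
      rw [unstable_shift, he, show (m:ℤ) + 1 + x = x + m + 1 from by ring]
      exact hr
  exact le_iSup₂ (f := fun (η'' : Config) (_ : SWindow η'' (n:ℕ∞) (m:ℕ∞)) =>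
    μ (Ev η'' k 0)) _ hSW

end PerSite

section Counting2

variable {μ : Measure (ℕ → ℤ → Bool)}

lemma LE_triple {η : Config} {U' : Finset ℤ} (hmem : ∀ x, x ∈ U' ↔ Unstable η x)
    {x : ℤ} (hx : x ∈ U') (hxm : x - 1 ∉ U') : x + 1 ∈ U' ∧ x + 2 ∈ U' := by
  rcases (unstable_iff_triple η x).mp ((hmem x).mp hx) with ⟨s, h1, h2, h3, h4⟩
  have hunst : ∀ w, s ≤ w → w ≤ s + 2 → w ∈ U' := fun w hw1 hw2 =>
    (hmem w).mpr ((unstable_iff_triple η w).mpr ⟨s, by omega, by omega, h3, h4⟩)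
  have hs : s = x := by
    by_contra h
    exact hxm (hunst (x-1) (by omega) (by omega))
  exact ⟨hunst (x+1) (by omega) (by omega), hunst (x+2) (by omega) (by omega)⟩

lemma RE_triple {η : Config} {U' : Finset ℤ} (hmem : ∀ x, x ∈ U' ↔ Unstable η x)
    {x : ℤ} (hx : x ∈ U') (hxp : x + 1 ∉ U') : x - 1 ∈ U' ∧ x - 2 ∈ U' := by
  rcases (unstable_iff_triple η x).mp ((hmem x).mp hx) with ⟨s, h1, h2, h3, h4⟩
  have hunst : ∀ w, s ≤ w → w ≤ s + 2 → w ∈ U' := fun w hw1 hw2 =>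
    (hmem w).mpr ((unstable_iff_triple η w).mpr ⟨s, by omega, by omega, h3, h4⟩)
  have hs : s = x - 2 := by
    by_contra h
    exact hxp (hunst (x+1) (by omega) (by omega))
  exact ⟨hunst (x-1) (by omega) (by omega), hunst (x-2) (by omega) (by omega)⟩

lemma card_triple (x : ℤ) : ({x, x+1, x+2} : Finset ℤ).card = 3 := by
  rw [Finset.card_insert_of_notMem
      (by simp only [Finset.mem_insert, Finset.mem_singleton]; omega),
    Finset.card_insert_of_notMem (by simp only [Finset.mem_singleton]; omega),
    Finset.card_singleton]

lemma card_LE {η : Config} {U' : Finset ℤ} (hmem : ∀ x, x ∈ U' ↔ Unstable η x) :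
    3 * (U'.filter (fun x => x - 1 ∉ U')).card ≤ U'.card := by
  classical
  set LE := U'.filter (fun x => x - 1 ∉ U') with hLE
  have hfacts : ∀ x ∈ LE, x ∈ U' ∧ x - 1 ∉ U' ∧ x + 1 ∈ U' ∧ x + 2 ∈ U' := by
    intro x hx
    rw [hLE, Finset.mem_filter] at hx
    exact ⟨hx.1, hx.2, LE_triple hmem hx.1 hx.2⟩
  have hdisj : ∀ x ∈ LE, ∀ y ∈ LE, x ≠ y →
      Disjoint ({x, x+1, x+2} : Finset ℤ) {y, y+1, y+2} := by
    intro x hx y hy hxy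
    obtain ⟨hxU, hxm, hxp1, hxp2⟩ := hfacts x hx
    obtain ⟨hyU, hym, hyp1, hyp2⟩ := hfacts y hy
    rw [Finset.disjoint_left]
    intro z hz1 hz2
    simp only [Finset.mem_insert, Finset.mem_singleton] at hz1 hz2
    have hrel : y = x + 1 ∨ y = x + 2 ∨ y = x - 1 ∨ y = x - 2 := by omega
    rcases hrel with h | h | h | h
    · exact hym (by rw [h, show x + 1 - 1 = x from by ring]; exact hxU)
    · exact hym (by rw [h, show x + 2 - 1 = x + 1 from by ring]; exact hxp1)
    · exact hxm (by rw [← h]; exact hyU)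
    · exact hxm (by rw [show x - 1 = y + 1 from by omega]; exact hyp1)
  have hsub : LE.biUnion (fun x => ({x, x+1, x+2} : Finset ℤ)) ⊆ U' := by
    intro z hz
    rcases Finset.mem_biUnion.mp hz with ⟨x, hx, hzx⟩
    obtain ⟨hxU, _, hxp1, hxp2⟩ := hfacts x hx
    simp only [Finset.mem_insert, Finset.mem_singleton] at hzx
    rcases hzx with rfl | rfl | rfl <;> assumption
  calc 3 * LE.card = ∑ x ∈ LE, ({x, x+1, x+2} : Finset ℤ).card := by
        rw [Finset.sum_congr rfl (fun x _ => card_triple x), Finset.sum_const,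
          smul_eq_mul, mul_comm]
    _ = (LE.biUnion (fun x => ({x, x+1, x+2} : Finset ℤ))).card :=
        (Finset.card_biUnion hdisj).symm
    _ ≤ U'.card := Finset.card_le_card hsub

lemma card_RE {η : Config} {U' : Finset ℤ} (hmem : ∀ x, x ∈ U' ↔ Unstable η x) :
    3 * (U'.filter (fun x => x + 1 ∉ U')).card ≤ U'.card := by
  classical
  set RE := U'.filter (fun x => x + 1 ∉ U') with hRE
  have hfacts : ∀ x ∈ RE, x ∈ U' ∧ x + 1 ∉ U' ∧ x - 1 ∈ U' ∧ x - 2 ∈ U' := by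
    intro x hx
    rw [hRE, Finset.mem_filter] at hx
    exact ⟨hx.1, hx.2, RE_triple hmem hx.1 hx.2⟩
  have hdisj : ∀ x ∈ RE, ∀ y ∈ RE, x ≠ y →
      Disjoint ({x, x-1, x-2} : Finset ℤ) {y, y-1, y-2} := by
    intro x hx y hy hxy
    obtain ⟨hxU, hxp, hxm1, hxm2⟩ := hfacts x hx
    obtain ⟨hyU, hyp, hym1, hym2⟩ := hfacts y hy
    rw [Finset.disjoint_left]
    intro z hz1 hz2
    simp only [Finset.mem_insert, Finset.mem_singleton] at hz1 hz2
    have hrel : y = x + 1 ∨ y = x + 2 ∨ y = x - 1 ∨ y = x - 2 := by omega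
    rcases hrel with h | h | h | h
    · exact hxp (by rw [show x + 1 = y from h.symm]; exact hyU)
    · exact hxp (by rw [show x + 1 = y - 1 from by omega]; exact hym1)
    · exact hyp (by rw [show y + 1 = x from by omega]; exact hxU)
    · exact hyp (by rw [show y + 1 = x - 1 from by omega]; exact hxm1)
  have hsub : RE.biUnion (fun x => ({x, x-1, x-2} : Finset ℤ)) ⊆ U' := by
    intro z hz
    rcases Finset.mem_biUnion.mp hz with ⟨x, hx, hzx⟩
    obtain ⟨hxU, _, hxm1, hxm2⟩ := hfacts x hx
    simp only [Finset.mem_insert, Finset.mem_singleton] at hzx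
    rcases hzx with rfl | rfl | rfl <;> assumption
  have hcard3 : ∀ x : ℤ, ({x, x-1, x-2} : Finset ℤ).card = 3 := by
    intro x
    rw [Finset.card_insert_of_notMem
        (by simp only [Finset.mem_insert, Finset.mem_singleton]; omega),
      Finset.card_insert_of_notMem (by simp only [Finset.mem_singleton]; omega),
      Finset.card_singleton]
  calc 3 * RE.card = ∑ x ∈ RE, ({x, x-1, x-2} : Finset ℤ).card := by
        rw [Finset.sum_congr rfl (fun x _ => hcard3 x), Finset.sum_const,
          smul_eq_mul, mul_comm]
    _ = (RE.biUnion (fun x => ({x, x-1, x-2} : Finset ℤ))).card :=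
        (Finset.card_biUnion hdisj).symm
    _ ≤ U'.card := Finset.card_le_card hsub

lemma part1 (hμ : IIDCoins μ) (k : ℕ) (η : Config) (U' : Finset ℤ)
    (hmem : ∀ x, x ∈ U' ↔ Unstable η x) :
    ∑ x ∈ U', μ (Ev η k x) ≤
      (1/3 : ℝ≥0∞) * pIII μ k * U'.card + (2/3 : ℝ≥0∞) * pI μ k * U'.card := by
  classical
  set p : ℤ → Prop := fun x => x - 1 ∈ U' ∧ x + 1 ∈ U' with hp
  have hsplit := Finset.sum_filter_add_sum_filter_not U' p (fun x => μ (Ev η k x))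
  set a := (U'.filter p).card with ha
  set b := (U'.filter (fun x => ¬ p x)).card with hb
  have hab : a + b = U'.card := by
    rw [ha, hb, Finset.card_filter_add_card_filter_not]
  have hble : 3 * b ≤ 2 * U'.card := by
    have hsub : U'.filter (fun x => ¬ p x) ⊆
        (U'.filter (fun x => x - 1 ∉ U')) ∪ (U'.filter (fun x => x + 1 ∉ U')) := by
      intro x hx
      rw [Finset.mem_filter] at hx
      rw [Finset.mem_union, Finset.mem_filter, Finset.mem_filter]
      by_cases h1 : x - 1 ∈ U'
      · exact Or.inr ⟨hx.1, fun h2 => hx.2 ⟨h1, h2⟩⟩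
      · exact Or.inl ⟨hx.1, h1⟩
    have := Finset.card_le_card hsub
    have := Finset.card_union_le (U'.filter (fun x => x - 1 ∉ U'))
      (U'.filter (fun x => x + 1 ∉ U'))
    have := card_LE hmem
    have := card_RE hmem
    omega
  have hsum1 : ∑ x ∈ U'.filter p, μ (Ev η k x) ≤ a • pIII μ k := by
    refine Finset.sum_le_card_nsmul _ _ _ (fun x hx => ?_)
    rw [Finset.mem_filter] at hx
    exact bound_pIII hμ k η x ((hmem _).mp hx.2.1) ((hmem _).mp hx.1) ((hmem _).mp hx.2.2)
  have hsum2 : ∑ x ∈ U'.filter (fun x => ¬ p x), μ (Ev η k x) ≤ b • pI μ k := by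
    refine Finset.sum_le_card_nsmul _ _ _ (fun x hx => ?_)
    rw [Finset.mem_filter] at hx
    exact bound_pI hμ k η x ((hmem _).mp hx.1)
  rw [← hsplit]
  refine le_trans (add_le_add hsum1 hsum2) ?_
  rw [nsmul_eq_mul, nsmul_eq_mul]
  -- now pure ℝ≥0∞ arithmetic
  obtain ⟨c, hc1, hc2⟩ : ∃ c : ℕ, 3 * a = U'.card + c ∧ 2 * U'.card = 3 * b + c := by
    refine ⟨3 * a - U'.card, by omega, by omega⟩
  have h3 : (3:ℝ≥0∞) ≠ 0 := by norm_num
  have h3' : (3:ℝ≥0∞) ≠ ⊤ := by norm_num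
  rw [← ENNReal.mul_le_mul_iff_right h3 h3']
  have e13 : (3:ℝ≥0∞) * (1/3) = 1 := by
    rw [mul_one_div, ENNReal.div_self h3 h3']
  have e23 : (3:ℝ≥0∞) * (2/3) = 2 := by
    rw [show (2:ℝ≥0∞)/3 = 2 * (1/3) from by rw [mul_one_div], ← mul_assoc,
      mul_comm (3:ℝ≥0∞) 2, mul_assoc, e13, mul_one]
  have lhs_eq : (3:ℝ≥0∞) * (↑a * pIII μ k + ↑b * pI μ k)
      = ((U'.card : ℝ≥0∞) + c) * pIII μ k + ((3*b : ℕ) : ℝ≥0∞) * pI μ k := by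
    rw [mul_add, ← mul_assoc, ← mul_assoc]
    congr 2
    · rw [show (3:ℝ≥0∞) * ↑a = ((3*a : ℕ) : ℝ≥0∞) from by push_cast; ring, hc1]
      push_cast; ring
    · push_cast; ring
  have rhs_eq : (3:ℝ≥0∞) * ((1/3) * pIII μ k * ↑U'.card + (2/3) * pI μ k * ↑U'.card)
      = (U'.card : ℝ≥0∞) * pIII μ k + ((3*b:ℕ) : ℝ≥0∞) * pI μ k + (c:ℝ≥0∞) * pI μ k := by
    rw [mul_add, ← mul_assoc, ← mul_assoc, ← mul_assoc, ← mul_assoc, e13, e23, one_mul]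
    have : (2:ℝ≥0∞) * pI μ k * ↑U'.card = ((2 * U'.card : ℕ) : ℝ≥0∞) * pI μ k := by
      push_cast; ring
    rw [this, hc2]
    push_cast; ring
  rw [lhs_eq, rhs_eq, add_mul]
  have : (c:ℝ≥0∞) * pIII μ k ≤ (c:ℝ≥0∞) * pI μ k :=
    mul_le_mul_right (pIII_le_pI μ k) _
  calc (U'.card:ℝ≥0∞) * pIII μ k + (c:ℝ≥0∞) * pIII μ k + ((3*b:ℕ):ℝ≥0∞) * pI μ k
      ≤ (U'.card:ℝ≥0∞) * pIII μ k + (c:ℝ≥0∞) * pI μ k + ((3*b:ℕ):ℝ≥0∞) * pI μ k := by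
        exact add_le_add_left (add_le_add_right this _) _
    _ = (U'.card:ℝ≥0∞) * pIII μ k + ((3*b:ℕ):ℝ≥0∞) * pI μ k + (c:ℝ≥0∞) * pI μ k := by ring

end Counting2

section Fiber

variable {μ : Measure (ℕ → ℤ → Bool)}

lemma fiber_bound (hμ : IIDCoins μ) (k : ℕ) (hk : 1 ≤ k) (η : Config) (U' : Finset ℤ)
    (hmem : ∀ x, x ∈ U' ↔ Unstable η x) (hU'ne : U'.Nonempty)
    (ℓ : ℤ) (hℓU : ℓ ∈ U') (hℓm : ℓ - 1 ∉ U') (T : Finset ℤ)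
    (hT : ∀ x ∈ T, x ∉ U' ∧
      ((x < ℓ ∧ ∀ u ∈ U', x < u → ℓ ≤ u) ∨
       (ℓ < x ∧ (∀ u ∈ U', u < x) ∧ ∀ u ∈ U', ℓ ≤ u))) :
    ∑ x ∈ T, μ (Ev η k x) ≤
      (Finset.Icc 1 (4*k)).sup
        (fun g => ∑ i ∈ Finset.Icc 1 g, pS μ k ((i - 1 : ℕ) : ℕ∞) ((g - i : ℕ) : ℕ∞)) := by
  classical
  set B := U'.filter (fun u => u < ℓ) with hB
  set r : ℤ := if h : B.Nonempty then B.max' h else 0 with hrdef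
  have hrmem : B.Nonempty → r ∈ U' ∧ r < ℓ := by
    intro h
    rw [hrdef, dif_pos h]
    have hmf := Finset.mem_filter.mp (B.max'_mem h)
    exact ⟨hmf.1, hmf.2⟩
  have hrmax : B.Nonempty → ∀ u ∈ U', u < ℓ → u ≤ r := by
    intro h u hu hul
    rw [hrdef, dif_pos h]
    exact Finset.le_max' B u (Finset.mem_filter.mpr ⟨hu, hul⟩)
  have hrl2 : B.Nonempty → r ≤ ℓ - 2 := by
    intro h
    have h1 := hrmem h
    by_contra hcon
    have hreq : r = ℓ - 1 := by omega
    exact hℓm (hreq ▸ h1.1)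
  have windowL : ∀ y : ℤ, (B.Nonempty → r < y) → y < ℓ → ¬ Unstable η y := by
    intro y h1 h2 hy
    have hyU : y ∈ U' := (hmem y).mpr hy
    have hBne : B.Nonempty := ⟨y, Finset.mem_filter.mpr ⟨hyU, h2⟩⟩
    exact absurd (hrmax hBne y hyU h2) (by have := h1 hBne; omega)
  set mx : ℤ := U'.max' hU'ne with hmx
  have hmxU : mx ∈ U' := U'.max'_mem hU'ne
  have hmxmax : ∀ u ∈ U', u ≤ mx := fun u hu => Finset.le_max' U' u hu
  set bflag : ℤ := if B.Nonempty then 1 else 0 with hbflag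
  set G : ℕ := if B.Nonempty ∧ ℓ - r - 1 ≤ 4*(k:ℤ) then (ℓ - r - 1).toNat else 4*k with hGdef
  have hG4 : ¬ (B.Nonempty ∧ ℓ - r - 1 ≤ 4*(k:ℤ)) → G = 4*k := by
    intro h; rw [hGdef, if_neg h]
  have hGshort : (B.Nonempty ∧ ℓ - r - 1 ≤ 4*(k:ℤ)) → (G : ℤ) = ℓ - r - 1 := by
    intro h; rw [hGdef, if_pos h]; have := hrl2 h.1; omega
  have hG1 : 1 ≤ G := by
    rw [hGdef]; split_ifs with h
    · have := hrl2 h.1; omega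
    · omega
  have hG2 : G ≤ 4*k := by
    rw [hGdef]; split_ifs with h
    · omega
    · omega
  set ψ : ℤ → ℕ := fun x =>
    if x < ℓ then
      (if B.Nonempty ∧ (ℓ - r - 1 ≤ 4*(k:ℤ) ∨ x - r ≤ 2*(k:ℤ)) then (x - r).toNat
       else 4*k - (ℓ - x - 1).toNat)
    else (x - mx).toNat with hψ
  set Rel : ℤ → Prop :=
    fun x => ∃ u ∈ U', x - 2*(k:ℤ) ≤ u ∧ u ≤ x + 2*(k:ℤ) with hRel
  set f : ℕ → ℝ≥0∞ :=
    fun i => pS μ k ((i - 1 : ℕ) : ℕ∞) ((G - i : ℕ) : ℕ∞) with hf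
  have hdatum : ∀ x ∈ T, Rel x → (μ (Ev η k x) ≤ f (ψ x)) ∧ 1 ≤ ψ x ∧ ψ x ≤ G ∧
      ((x < ℓ ∧ bflag = 1 ∧ ℓ - r - 1 ≤ 4*(k:ℤ) ∧ (ψ x : ℤ) = x - r ∧ r < x) ∨
       (x < ℓ ∧ bflag = 1 ∧ 4*(k:ℤ) < ℓ - r - 1 ∧ (ψ x : ℤ) = x - r ∧ r < x ∧
         x - r ≤ 2*(k:ℤ)) ∨
       (x < ℓ ∧ (ψ x : ℤ) = 4*(k:ℤ) - (ℓ - x - 1) ∧ 0 ≤ ℓ - x - 1 ∧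
         ℓ - x - 1 ≤ 2*(k:ℤ) - 1 ∧ (bflag = 0 ∨ 4*(k:ℤ) < ℓ - r - 1)) ∨
       (ℓ < x ∧ bflag = 0 ∧ (ψ x : ℤ) = x - mx ∧ mx < x ∧ x - mx ≤ 2*(k:ℤ))) := by
    intro x hx hRelx
    obtain ⟨hxU, hcase⟩ := hT x hx
    rcases hcase with ⟨hxl, hnext⟩ | ⟨hxr, hall, hminℓ⟩
    · -- x left of ℓ
      have hrx : B.Nonempty → r < x := by
        intro h
        have h1 := hrmem h
        rcases lt_trichotomy x r with hlt | heq | hgt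
        · exact absurd (hnext r h1.1 hlt) (by omega)
        · exact absurd (heq ▸ h1.1) hxU
        · exact hgt
      by_cases hshort : B.Nonempty ∧ ℓ - r - 1 ≤ 4*(k:ℤ)
      · -- short gap: direct bound
        have hbf : bflag = 1 := by rw [hbflag, if_pos hshort.1]
        have hrx' := hrx hshort.1
        have hψx : (ψ x : ℤ) = x - r := by
          simp only [hψ]
          rw [if_pos hxl, if_pos ⟨hshort.1, Or.inl hshort.2⟩]
          omega
        have hGval := hGshort hshort
        have hb := bound_pS_both hμ k η x ((x - r - 1).toNat) ((ℓ - x - 1).toNat)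
          (fun y h1 h2 => windowL y (fun _ => by omega) (by omega))
          (by rw [show x - ((x - r - 1).toNat : ℤ) - 1 = r from by omega]
              exact (hmem r).mp (hrmem hshort.1).1)
          (by rw [show x + ((ℓ - x - 1).toNat : ℤ) + 1 = ℓ from by omega]
              exact (hmem ℓ).mp hℓU)
        refine ⟨?_, by omega, by omega, Or.inl ⟨hxl, hbf, hshort.2, hψx, hrx'⟩⟩
        have e1 : ψ x - 1 = (x - r - 1).toNat := by omega
        have e2 : G - ψ x = (ℓ - x - 1).toNat := by omega
        rw [hf]
        simp only
        rw [e1, e2]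
        exact hb
      · by_cases hBtype : B.Nonempty ∧ x - r ≤ 2*(k:ℤ)
        · -- long gap, site near the left boundary
          have hbf : bflag = 1 := by rw [hbflag, if_pos hBtype.1]
          have hrx' := hrx hBtype.1
          have hlong : 4*(k:ℤ) < ℓ - r - 1 := by
            by_contra hcon
            exact hshort ⟨hBtype.1, by omega⟩
          have hψx : (ψ x : ℤ) = x - r := by
            simp only [hψ]
            rw [if_pos hxl, if_pos ⟨hBtype.1, Or.inr hBtype.2⟩]
            omega
          have hGval := hG4 hshort
          have hb := bound_pS_right hμ k hk η x (((x - r - 1).toNat : ℕ∞))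
            (4*k - (x - r).toNat) (by omega)
            (by
              intro y hy1 hy2
              have hy1' := hy1 (x - r - 1).toNat rfl
              exact windowL y (fun _ => by omega) (by omega))
            (by
              intro nn hnn
              have hnn' : (x - r - 1).toNat = nn := Nat.cast_inj.mp hnn
              rw [show x - (nn : ℤ) - 1 = r from by omega]
              exact (hmem r).mp (hrmem hBtype.1).1)
          refine ⟨?_, by omega, by omega,
            Or.inr (Or.inl ⟨hxl, hbf, hlong, hψx, hrx', hBtype.2⟩)⟩
          have e1 : ψ x - 1 = (x - r - 1).toNat := by omega
          have e2 : G - ψ x = 4*k - (x - r).toNat := by omega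
          rw [hf]
          simp only
          rw [e1, e2]
          exact hb
        · -- long or infinite gap, site near the right boundary ℓ
          have hCc : ¬ B.Nonempty ∨ (4*(k:ℤ) < ℓ - r - 1 ∧ 2*(k:ℤ) < x - r) := by
            by_cases hBne : B.Nonempty
            · refine Or.inr ⟨?_, ?_⟩
              · by_contra hcon; exact hshort ⟨hBne, by omega⟩
              · by_contra hcon; exact hBtype ⟨hBne, by omega⟩
            · exact Or.inl hBne
          have hbfd : bflag = 0 ∨ 4*(k:ℤ) < ℓ - r - 1 := by
            rcases hCc with h | h
            · exact Or.inl (by rw [hbflag, if_neg h])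
            · exact Or.inr h.1
          have hm2k : ℓ - x - 1 ≤ 2*(k:ℤ) - 1 := by
            obtain ⟨u, huU, hu1, hu2⟩ := hRelx
            rcases lt_trichotomy u x with hlt | heq | hgt
            · have hBne : B.Nonempty :=
                ⟨u, by rw [hB, Finset.mem_filter]; exact ⟨huU, by omega⟩⟩
              have hur : u ≤ r := hrmax hBne u huU (by omega)
              rcases hCc with h | h
              · exact absurd hBne h
              · omega
            · exact absurd (heq ▸ huU) hxU
            · have := hnext u huU hgt; omega
          have hψx : (ψ x : ℤ) = 4*(k:ℤ) - (ℓ - x - 1) := by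
            simp only [hψ]
            rw [if_pos hxl, if_neg (by
              rintro ⟨hb1, hb2 | hb2⟩
              · exact hshort ⟨hb1, hb2⟩
              · exact hBtype ⟨hb1, hb2⟩)]
            omega
          have hGval := hG4 hshort
          have hb := bound_pS_left hμ k hk η x (4*k - (ℓ - x - 1).toNat - 1)
            (((ℓ - x - 1).toNat : ℕ∞)) (by omega)
            (by
              intro y hy1 hy2
              have hy2' := hy2 (ℓ - x - 1).toNat rfl
              refine windowL y (fun hBne => ?_) (by omega)
              rcases hCc with h | h
              · exact absurd hBne h
              · omega)
            (by
              intro mm hmm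
              have hmm' : (ℓ - x - 1).toNat = mm := Nat.cast_inj.mp hmm
              rw [show x + (mm : ℤ) + 1 = ℓ from by omega]
              exact (hmem ℓ).mp hℓU)
          refine ⟨?_, by omega, by omega,
            Or.inr (Or.inr (Or.inl ⟨hxl, hψx, by omega, hm2k, hbfd⟩))⟩
          have e1 : ψ x - 1 = 4*k - (ℓ - x - 1).toNat - 1 := by omega
          have e2 : G - ψ x = (ℓ - x - 1).toNat := by omega
          rw [hf]
          simp only
          rw [e1, e2]
          exact hb
    · -- x right of everything
      have hBempty : ¬ B.Nonempty := by
        rintro ⟨u, hu⟩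
        have hu' := Finset.mem_filter.mp hu
        have := hminℓ u hu'.1
        omega
      have hbf : bflag = 0 := by rw [hbflag, if_neg hBempty]
      have hGval := hG4 (fun hc => hBempty hc.1)
      have hmxx : mx < x := hall mx hmxU
      have hψx : (ψ x : ℤ) = x - mx := by
        simp only [hψ]
        rw [if_neg (by omega)]
        omega
      have hx2k : x - mx ≤ 2*(k:ℤ) := by
        obtain ⟨u, huU, hu1, hu2⟩ := hRelx
        have := hmxmax u huU
        omega
      have hb := bound_pS_right hμ k hk η x (((x - mx - 1).toNat : ℕ∞))
        (4*k - (x - mx).toNat) (by omega)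
        (by
          intro y hy1 hy2
          have hy1' := hy1 (x - mx - 1).toNat rfl
          intro hy
          exact absurd (hmxmax y ((hmem y).mpr hy)) (by omega))
        (by
          intro nn hnn
          have hnn' : (x - mx - 1).toNat = nn := Nat.cast_inj.mp hnn
          rw [show x - (nn : ℤ) - 1 = mx from by omega]
          exact (hmem mx).mp hmxU)
      refine ⟨?_, by omega, by omega,
        Or.inr (Or.inr (Or.inr ⟨hxr, hbf, hψx, hmxx, hx2k⟩))⟩
      have e1 : ψ x - 1 = (x - mx - 1).toNat := by omega
      have e2 : G - ψ x = 4*k - (x - mx).toNat := by omega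
      rw [hf]
      simp only
      rw [e1, e2]
      exact hb
  have hzero : ∀ x ∈ T.filter (fun x => ¬ Rel x), μ (Ev η k x) = 0 := by
    intro x hx
    rw [Finset.mem_filter] at hx
    have hempty : Ev η k x = ∅ :=
      Ev_far_empty k η x (fun y h1 h2 hy => hx.2 ⟨y, (hmem y).mpr hy, h1, h2⟩)
    rw [hempty, measure_empty]
  have hinj : ∀ x ∈ T.filter Rel, ∀ y ∈ T.filter Rel, ψ x = ψ y → x = y := by
    intro x hx y hy hxy
    rw [Finset.mem_filter] at hx hy
    obtain ⟨_, _, _, hdx⟩ := hdatum x hx.1 hx.2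
    obtain ⟨_, _, _, hdy⟩ := hdatum y hy.1 hy.2
    have hcast : (ψ x : ℤ) = (ψ y : ℤ) := by rw [hxy]
    rcases hdx with ⟨h1,h2,h3,h4,h5⟩ | ⟨h1,h2,h3,h4,h5,h6⟩ |
        ⟨h1,h2,h3,h4,h5|h5⟩ | ⟨h1,h2,h3,h4,h5⟩ <;>
      rcases hdy with ⟨g1,g2,g3,g4,g5⟩ | ⟨g1,g2,g3,g4,g5,g6⟩ |
        ⟨g1,g2,g3,g4,g5|g5⟩ | ⟨g1,g2,g3,g4,g5⟩ <;>
      omega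
  calc ∑ x ∈ T, μ (Ev η k x)
      = ∑ x ∈ T.filter Rel, μ (Ev η k x) +
        ∑ x ∈ T.filter (fun x => ¬ Rel x), μ (Ev η k x) :=
        (Finset.sum_filter_add_sum_filter_not T Rel _).symm
    _ = ∑ x ∈ T.filter Rel, μ (Ev η k x) := by
        rw [Finset.sum_congr rfl hzero, Finset.sum_const_zero, add_zero]
    _ ≤ ∑ x ∈ T.filter Rel, f (ψ x) :=
        Finset.sum_le_sum (fun x hx => by
          rw [Finset.mem_filter] at hx
          exact (hdatum x hx.1 hx.2).1)
    _ = ∑ i ∈ (T.filter Rel).image ψ, f i := (Finset.sum_image hinj).symm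
    _ ≤ ∑ i ∈ Finset.Icc 1 G, f i := by
        refine Finset.sum_le_sum_of_subset ?_
        intro i hi
        rcases Finset.mem_image.mp hi with ⟨x, hx, rfl⟩
        rw [Finset.mem_filter] at hx
        obtain ⟨_, hr1, hr2, _⟩ := hdatum x hx.1 hx.2
        exact Finset.mem_Icc.mpr ⟨hr1, hr2⟩
    _ ≤ _ := Finset.le_sup (f := fun g => ∑ i ∈ Finset.Icc 1 g,
          pS μ k ((i - 1 : ℕ) : ℕ∞) ((g - i : ℕ) : ℕ∞))
        (Finset.mem_Icc.mpr ⟨hG1, hG2⟩)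

end Fiber

lemma ennreal_third (u v : ℕ) (h : 3 * u ≤ v) (X : ℝ≥0∞) :
    (u : ℝ≥0∞) * X ≤ (1/3 : ℝ≥0∞) * X * (v : ℝ≥0∞) := by
  have h3 : (3:ℝ≥0∞) ≠ 0 := by norm_num
  have h3' : (3:ℝ≥0∞) ≠ ⊤ := by norm_num
  rw [← ENNReal.mul_le_mul_iff_right h3 h3']
  have e13 : (3:ℝ≥0∞) * (1/3) = 1 := by rw [mul_one_div, ENNReal.div_self h3 h3']
  calc (3:ℝ≥0∞) * ((u:ℝ≥0∞) * X) = ((3*u : ℕ) : ℝ≥0∞) * X := by push_cast; ring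
    _ ≤ (v:ℝ≥0∞) * X := mul_le_mul_left (Nat.cast_le.mpr h) _
    _ = (3:ℝ≥0∞) * ((1/3) * X * (v:ℝ≥0∞)) := by
        rw [← mul_assoc, ← mul_assoc, e13, one_mul, mul_comm]


/-- the supermartingale-type bound
`E[I(R^k(η))] ≤ ((1/3) p_k^{III} + (2/3) p_k^I + (1/3) max_{1 ≤ g ≤ 4k} Σ_{i=1}^g p_k^S(i-1, g-i)) I(η)`
for configurations with finitely many (and at least one) unstable sites. -/
theorem expected_unstable_bound (μ : Measure (ℕ → ℤ → Bool)) [IsProbabilityMeasure μ]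
    (hμ : IIDCoins μ) (k : ℕ) (hk : 1 ≤ k) (η : Config)
    (hfin : {x : ℤ | Unstable η x}.Finite)
    (hne : {x : ℤ | Unstable η x}.Nonempty) :
    ∫⁻ ω, (numUnstable (evolve ω η k) : ℝ≥0∞) ∂μ ≤
      ((1 / 3 : ℝ≥0∞) * pIII μ k + (2 / 3 : ℝ≥0∞) * pI μ k +
        (1 / 3 : ℝ≥0∞) * (Finset.Icc 1 (4 * k)).sup
          (fun g => ∑ i ∈ Finset.Icc 1 g, pS μ k ((i - 1 : ℕ) : ℕ∞) ((g - i : ℕ) : ℕ∞)))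
        * (numUnstable η : ℝ≥0∞) := by
  classical
  set U' : Finset ℤ := hfin.toFinset with hU'def
  have hmem : ∀ x : ℤ, x ∈ U' ↔ Unstable η x := fun x => hfin.mem_toFinset
  have hU'ne : U'.Nonempty := by
    rw [hU'def]
    exact (Set.Finite.toFinset_nonempty hfin).mpr hne
  set M := (Finset.Icc 1 (4*k)).sup
    (fun g => ∑ i ∈ Finset.Icc 1 g, pS μ k ((i - 1 : ℕ) : ℕ∞) ((g - i : ℕ) : ℕ∞)) with hM
  have hInum : (numUnstable η : ℝ≥0∞) = (U'.card : ℝ≥0∞) := by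
    have h1 : numUnstable η = (U'.card : ℕ∞) := by
      rw [numUnstable, hU'def, Set.Finite.encard_eq_coe_toFinset_card]
    rw [h1, ENat.toENNReal_coe]
  set W : Finset ℤ := U'.biUnion (fun u => Finset.Icc (u - 2*(k:ℤ)) (u + 2*(k:ℤ))) with hW
  have hUW : U' ⊆ W := by
    intro u hu
    rw [hW]
    exact Finset.mem_biUnion.mpr ⟨u, hu, Finset.mem_Icc.mpr (by omega)⟩
  -- pointwise decomposition of the number of unstable sites at time k
  have hpt : ∀ ω : ℕ → ℤ → Bool, (numUnstable (evolve ω η k) : ℝ≥0∞)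
      = ∑ x ∈ W, (Ev η k x).indicator (fun _ => (1:ℝ≥0∞)) ω := by
    intro ω
    have hsub : {x : ℤ | Unstable (evolve ω η k) x}
        = ↑(W.filter (fun x => Unstable (evolve ω η k) x)) := by
      ext x
      simp only [Finset.coe_filter, Set.mem_setOf_eq]
      constructor
      · intro hx
        refine ⟨?_, hx⟩
        by_contra hxW
        refine (evolve_stable_ball ω η k x (fun y h1 h2 hy => hxW ?_)).2 hx
        rw [hW]
        exact Finset.mem_biUnion.mpr ⟨y, (hmem y).mpr hy, Finset.mem_Icc.mpr (by omega)⟩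
      · exact fun h => h.2
    have h1 : numUnstable (evolve ω η k)
        = ((W.filter (fun x => Unstable (evolve ω η k) x)).card : ℕ∞) := by
      rw [numUnstable, hsub, Set.encard_coe_eq_coe_finsetCard]
    rw [h1, ENat.toENNReal_coe, Finset.card_filter, Nat.cast_sum]
    refine Finset.sum_congr rfl (fun x _ => ?_)
    by_cases hx : Unstable (evolve ω η k) x
    · rw [if_pos hx, Set.indicator_of_mem (show ω ∈ Ev η k x from hx) (fun _ => (1:ℝ≥0∞))]
      simp
    · rw [if_neg hx,
        Set.indicator_of_notMem (show ω ∉ Ev η k x from hx) (fun _ => (1:ℝ≥0∞))]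
      simp
  have hint : ∫⁻ ω, (numUnstable (evolve ω η k) : ℝ≥0∞) ∂μ = ∑ x ∈ W, μ (Ev η k x) := by
    calc ∫⁻ ω, (numUnstable (evolve ω η k) : ℝ≥0∞) ∂μ
        = ∫⁻ ω, ∑ x ∈ W, (Ev η k x).indicator (fun _ => (1:ℝ≥0∞)) ω ∂μ :=
          lintegral_congr hpt
      _ = ∑ x ∈ W, ∫⁻ ω, (Ev η k x).indicator (fun _ => (1:ℝ≥0∞)) ω ∂μ :=
          lintegral_finset_sum W
            (fun x _ => measurable_const.indicator (measurableSet_Ev η k x))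
      _ = ∑ x ∈ W, μ (Ev η k x) := Finset.sum_congr rfl (fun x _ => by
          rw [lintegral_indicator_const (measurableSet_Ev η k x), one_mul])
  rw [hint, hInum]
  -- split off the initially unstable sites
  have hsplitW : ∑ x ∈ W, μ (Ev η k x)
      = ∑ x ∈ U', μ (Ev η k x) + ∑ x ∈ W \ U', μ (Ev η k x) := by
    rw [add_comm, Finset.sum_sdiff hUW]
  -- the "next unstable site weakly to the right" map
  set φ : ℤ → ℤ := fun x => if h : (U'.filter (fun u => x < u)).Nonempty
    then (U'.filter (fun u => x < u)).min' h else U'.min' hU'ne with hφ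
  set LE := U'.filter (fun x => x - 1 ∉ U') with hLE
  have hφprop : ∀ x : ℤ, x ∉ U' → (φ x ∈ U' ∧ φ x - 1 ∉ U') ∧
      ((x < φ x ∧ ∀ u ∈ U', x < u → φ x ≤ u) ∨
       (φ x < x ∧ (∀ u ∈ U', u < x) ∧ ∀ u ∈ U', φ x ≤ u)) := by
    intro x hxU
    by_cases h : (U'.filter (fun u => x < u)).Nonempty
    · have hφx : φ x = (U'.filter (fun u => x < u)).min' h := by
        simp only [hφ]; rw [dif_pos h]
      have hm := Finset.mem_filter.mp ((U'.filter (fun u => x < u)).min'_mem h)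
      have hle : ∀ u ∈ U', x < u → φ x ≤ u := by
        intro u hu hxu
        rw [hφx]
        exact Finset.min'_le _ u (Finset.mem_filter.mpr ⟨hu, hxu⟩)
      have hφU : φ x ∈ U' := by rw [hφx]; exact hm.1
      have hxφ : x < φ x := by rw [hφx]; exact hm.2
      refine ⟨⟨hφU, ?_⟩, Or.inl ⟨hxφ, hle⟩⟩
      intro hc
      by_cases hx1 : x < φ x - 1
      · have := hle _ hc hx1; omega
      · have : φ x - 1 = x := by omega
        exact hxU (this ▸ hc)
    · have hφx : φ x = U'.min' hU'ne := by simp only [hφ]; rw [dif_neg h]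
      have hminmem : φ x ∈ U' := by rw [hφx]; exact U'.min'_mem hU'ne
      have hminle : ∀ u ∈ U', φ x ≤ u := by
        intro u hu; rw [hφx]; exact Finset.min'_le U' u hu
      have hallx : ∀ u ∈ U', u < x := by
        intro u hu
        by_contra hc
        have hxu : x < u := by
          rcases lt_trichotomy u x with h1 | h1 | h1
          · exact absurd h1 hc
          · exact absurd (h1 ▸ hu) hxU
          · exact h1
        exact h ⟨u, Finset.mem_filter.mpr ⟨hu, hxu⟩⟩
      refine ⟨⟨hminmem, fun hc => ?_⟩, Or.inr ⟨hallx _ hminmem, hallx, hminle⟩⟩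
      have := hminle _ hc
      omega
  have hmaps : ∀ x ∈ W \ U', φ x ∈ LE := by
    intro x hx
    have hxU : x ∉ U' := (Finset.mem_sdiff.mp hx).2
    obtain ⟨⟨h1, h2⟩, _⟩ := hφprop x hxU
    rw [hLE]
    exact Finset.mem_filter.mpr ⟨h1, h2⟩
  have hpart2 : ∑ x ∈ W \ U', μ (Ev η k x) ≤ (LE.card : ℝ≥0∞) * M := by
    rw [← Finset.sum_fiberwise_of_maps_to hmaps (fun x => μ (Ev η k x))]
    calc ∑ ℓ ∈ LE, ∑ x ∈ (W \ U').filter (fun x => φ x = ℓ), μ (Ev η k x)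
        ≤ ∑ _ℓ ∈ LE, M := by
          refine Finset.sum_le_sum (fun ℓ hℓ => ?_)
          have hℓ' := Finset.mem_filter.mp (hLE ▸ hℓ)
          refine fiber_bound hμ k hk η U' hmem hU'ne ℓ hℓ'.1 hℓ'.2 _ ?_
          intro x hx
          have hx' := Finset.mem_filter.mp hx
          have hxU : x ∉ U' := (Finset.mem_sdiff.mp hx'.1).2
          obtain ⟨_, hbr⟩ := hφprop x hxU
          rw [hx'.2] at hbr
          exact ⟨hxU, hbr⟩
      _ = (LE.card : ℝ≥0∞) * M := by rw [Finset.sum_const, nsmul_eq_mul]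
  have hpart1 := part1 hμ k η U' hmem
  calc ∑ x ∈ W, μ (Ev η k x)
      = ∑ x ∈ U', μ (Ev η k x) + ∑ x ∈ W \ U', μ (Ev η k x) := hsplitW
    _ ≤ ((1/3 : ℝ≥0∞) * pIII μ k * U'.card + (2/3 : ℝ≥0∞) * pI μ k * U'.card)
        + (1/3 : ℝ≥0∞) * M * U'.card := by
        refine add_le_add hpart1 (le_trans hpart2 ?_)
        exact ennreal_third LE.card U'.card (card_LE hmem) M
    _ = ((1/3 : ℝ≥0∞) * pIII μ k + (2/3 : ℝ≥0∞) * pI μ k + (1/3 : ℝ≥0∞) * M)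
        * (U'.card : ℝ≥0∞) := by ring
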